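/- arXiv:1812.06523 — 2 statements merged into one kernel-verified Lean document; each statement's English description precedes it below -/
import Mathlib

section
/- Let 0 < q < 1, N ≥ 1, λ ∈ GT⁺_N, and set l_i = λ_i + N − i + 1/2 for i = 1, …, N. Then χ^B_λ(q^{1/2}, q^{3/2}, …, q^{N−1/2}) = ∏_{i=1}^{N} ( (q^{−l_i/2} − q^{l_i/2}) / (q^{−(N−i+1/2)/2} − q^{(N−i+1/2)/2}) ) · V^s(q^{l_N}, q^{l_{N−1}}, …, q^{l_1}) / V^s(q^{1/2}, q^{3/2}, …, q^{N−1/2}). -/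
noncomputable section
open Complex Finset Filter Topology

/-- The symmetrized Vandermonde `V^s(z) = ∏_{i<j} (z_i + z_i⁻¹ − z_j − z_j⁻¹)`. -/
def Vs {N : ℕ} (z : Fin N → ℂ) : ℂ :=
  ∏ p ∈ Finset.univ.filter (fun p : Fin N × Fin N => p.1 < p.2),
    (z p.1 + (z p.1)⁻¹ - z p.2 - (z p.2)⁻¹)

/-- The three classical series of root systems B, C, D. -/
inductive BCD | B | C | D
  deriving DecidableEq

/-- `ε = 1/2, 1, 0` for types B, C, D respectively. -/
def bcdEps : BCD → ℝ
  | .B => 1/2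
  | .C => 1
  | .D => 0

/-- The `(i,j)` entries of the Weyl determinant formulas, written as Laurent polynomials:
for type B, `(z^{m+1/2} − z^{−m−1/2})/(z^{1/2} − z^{−1/2}) = z^{−m}(1 + z + ⋯ + z^{2m})`;
for type C, `(z^{m+1} − z^{−m−1})/(z − z^{−1}) = z^{−m}(1 + z² + ⋯ + z^{2m})`;
for type D, `z^m + z^{−m}`. -/
def bcdEntry : BCD → ℕ → ℂ → ℂ
  | .B, m, z => z ^ (-(m : ℤ)) * ∑ r ∈ Finset.range (2 * m + 1), z ^ r
  | .C, m, z => z ^ (-(m : ℤ)) * ∑ r ∈ Finset.range (m + 1), z ^ (2 * r)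
  | .D, m, z => z ^ (m : ℤ) + z ^ (-(m : ℤ))

/-- The Weyl character formula ratio `det / V^s` (types B, C, D). -/
def qcChiRaw (G : BCD) {N : ℕ} (lam : Fin N → ℤ) (z : Fin N → ℂ) : ℂ :=
  (Matrix.of fun i j : Fin N =>
    bcdEntry G (lam i + (N : ℤ) - 1 - (i : ℕ)).toNat (z j)).det / Vs z

/-- The character `χ^G_λ`, i.e. the `W_N`-symmetric Laurent polynomial given by the Weyl
formula.  It is obtained from the ratio `det / V^s` as its (unique) continuous extension,
computed via a generic perturbation `z_i ↦ t^{i+1} z_i`; for every `z ∈ (ℂ∖{0})^N` the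
limit below exists and equals the value of the character Laurent polynomial at `z`. -/
def qcChi (G : BCD) {N : ℕ} (lam : Fin N → ℤ) (z : Fin N → ℂ) : ℂ :=
  limUnder (𝓝[{t : ℂ | Vs (fun i => t ^ ((i : ℕ) + 1) * z i) ≠ 0}] (1 : ℂ))
    (fun t => qcChiRaw G lam (fun i => t ^ ((i : ℕ) + 1) * z i))

/-- The q-Pochhammer symbol `(a; q)_n`. -/
def qPoch (q : ℝ) (a : ℂ) (n : ℕ) : ℂ := ∏ i ∈ Finset.range n, (1 - a * (q : ℂ) ^ i)

/-- The q-Pochhammer symbol `(a; q)_∞`. -/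
def qPochInf (q : ℝ) (a : ℂ) : ℂ := ∏' i : ℕ, (1 - a * (q : ℂ) ^ i)


/-! ### Auxiliary material for `stmt12` -/

/-- Chebyshev-like polynomials: `chebS n` evaluated at `u + u⁻¹` gives `∑_{r=-n}^n u^r`. -/
def chebS : ℕ → Polynomial ℝ
  | 0 => 1
  | 1 => Polynomial.X + 1
  | (n+2) => Polynomial.X * chebS (n+1) - chebS n

lemma chebS_monic_deg : ∀ n : ℕ, (chebS n).Monic ∧ (chebS n).natDegree = n := by
  intro n
  induction n using Nat.twoStepInduction with
  | zero => exact ⟨Polynomial.monic_one, Polynomial.natDegree_one⟩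
  | one =>
      refine ⟨?_, ?_⟩
      · simpa [chebS] using Polynomial.monic_X_add_C (1 : ℝ)
      · simpa [chebS] using Polynomial.natDegree_X_add_C (1 : ℝ)
  | more n ih ih1 =>
      have hM : (Polynomial.X * chebS (n+1)).Monic := (Polynomial.monic_X).mul ih1.1
      have hd : (Polynomial.X * chebS (n+1)).natDegree = n + 2 := by
        rw [Polynomial.natDegree_X_mul ih1.1.ne_zero, ih1.2]
      have hlt : (chebS n).natDegree < (Polynomial.X * chebS (n+1)).natDegree := by
        rw [hd, ih.2]; omega
      refine ⟨?_, ?_⟩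
      · show (Polynomial.X * chebS (n+1) - chebS n).Monic
        exact hM.sub_of_left (Polynomial.degree_lt_degree hlt)
      · show (Polynomial.X * chebS (n+1) - chebS n).natDegree = n + 2
        rw [Polynomial.natDegree_sub_eq_left_of_natDegree_lt hlt, hd]

lemma chebS_eval (u : ℝ) (hu : u ≠ 0) :
    ∀ n : ℕ, (chebS n).eval (u + u⁻¹)
      = u ^ (-(n : ℤ)) * ∑ r ∈ Finset.range (2 * n + 1), u ^ r := by
  intro n
  induction n using Nat.twoStepInduction with
  | zero => simp [chebS]
  | one =>
      have : ∑ r ∈ Finset.range (2 * 1 + 1), u ^ r = 1 + u + u ^ 2 := by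
        simp [Finset.sum_range_succ]
      simp only [chebS, Polynomial.eval_add, Polynomial.eval_X, Polynomial.eval_one, this]
      have h1 : u ^ (-(1:ℕ) : ℤ) = u⁻¹ := by norm_num
      rw [h1]
      field_simp
      ring
  | more n ih ih1 =>
      show (Polynomial.X * chebS (n+1) - chebS n).eval (u + u⁻¹) = _
      rw [Polynomial.eval_sub, Polynomial.eval_mul, Polynomial.eval_X, ih, ih1]
      have e1 : ∑ r ∈ Finset.range (2 * (n+1) + 1), u ^ r
          = (∑ r ∈ Finset.range (2 * n + 1), u ^ r) + u ^ (2*n+1) + u ^ (2*n+2) := by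
        have : 2 * (n+1) + 1 = (2*n+1) + 1 + 1 := by ring
        rw [this, Finset.sum_range_succ, Finset.sum_range_succ]
      have e2 : ∑ r ∈ Finset.range (2 * (n+2) + 1), u ^ r
          = (∑ r ∈ Finset.range (2 * n + 1), u ^ r) + u ^ (2*n+1) + u ^ (2*n+2)
            + u ^ (2*n+3) + u ^ (2*n+4) := by
        have : 2 * (n+2) + 1 = (2*n+1) + 1 + 1 + 1 + 1 := by ring
        rw [this, Finset.sum_range_succ, Finset.sum_range_succ, Finset.sum_range_succ,
          Finset.sum_range_succ]
      rw [e1, e2]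
      have hzp : ∀ k : ℕ, u ^ (-(k : ℤ)) = (u ^ k)⁻¹ := by
        intro k; rw [zpow_neg, zpow_natCast]
      rw [hzp, hzp, hzp]
      have hun : ∀ k : ℕ, u ^ k ≠ 0 := fun k => pow_ne_zero k hu
      field_simp
      ring

lemma aux_geom (t : ℝ) (ht : 0 < t) (ht1 : t ≠ 1) (m : ℕ) :
    t ^ (-(m : ℤ)) * ∑ r ∈ Finset.range (2 * m + 1), t ^ r
      = (t ^ ((m : ℝ) + 1/2) - t ^ (-((m : ℝ) + 1/2))) / (t ^ ((1:ℝ)/2) - t ^ (-((1:ℝ)/2))) := by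
  have h1 : t ^ ((m : ℝ) + 1/2) - t ^ (-((m : ℝ) + 1/2))
      = t ^ (-((m : ℝ) + 1/2)) * ((t : ℝ) ^ (2*m+1) - 1) := by
    rw [mul_sub, mul_one, ← Real.rpow_natCast t (2*m+1), ← Real.rpow_add ht]
    push_cast
    ring_nf
  have h2 : t ^ ((1:ℝ)/2) - t ^ (-((1:ℝ)/2)) = t ^ (-((1:ℝ)/2)) * (t - 1) := by
    have h2' : t ^ (-((1:ℝ)/2)) * t = t ^ ((1:ℝ)/2) := by
      nth_rewrite 2 [← Real.rpow_one t]
      rw [← Real.rpow_add ht]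
      norm_num
    rw [mul_sub, mul_one, h2']
  rw [h1, h2, geom_sum_eq ht1, mul_div_mul_comm]
  have h3 : t ^ (-((m : ℝ) + 1/2)) / t ^ (-((1:ℝ)/2)) = t ^ (-(m : ℤ)) := by
    rw [← Real.rpow_intCast t (-(m:ℤ)), ← Real.rpow_sub ht]
    push_cast
    ring_nf
  rw [h3]

lemma prod_pairs {M : Type*} [CommMonoid M] {N : ℕ} (f : Fin N → Fin N → M) :
    ∏ p ∈ Finset.univ.filter (fun p : Fin N × Fin N => p.1 < p.2), f p.1 p.2
      = ∏ i, ∏ j ∈ Finset.Ioi i, f i j := by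
  rw [Finset.prod_sigma']
  refine Finset.prod_nbij' (fun p : Fin N × Fin N => (⟨p.1, p.2⟩ : (_ : Fin N) × Fin N))
    (fun s : (_ : Fin N) × Fin N => (s.1, s.2)) ?_ ?_ ?_ ?_ ?_
  · intro a ha
    simp only [Finset.mem_filter, Finset.mem_univ, true_and] at ha
    simp only [Finset.mem_sigma, Finset.mem_univ, Finset.mem_Ioi, true_and]
    exact ha
  · intro a ha
    simp only [Finset.mem_sigma, Finset.mem_univ, Finset.mem_Ioi, true_and] at ha
    simp only [Finset.mem_filter, Finset.mem_univ, true_and]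
    exact ha
  · intro a _; rfl
  · intro a _; rfl
  · intro a _; rfl

lemma prod_pairs_rev {M : Type*} [CommMonoid M] {N : ℕ} (f : Fin N → Fin N → M) :
    ∏ p ∈ Finset.univ.filter (fun p : Fin N × Fin N => p.1 < p.2), f p.1.rev p.2.rev
      = ∏ p ∈ Finset.univ.filter (fun p : Fin N × Fin N => p.1 < p.2), f p.2 p.1 := by
  refine Finset.prod_nbij' (fun p => (p.2.rev, p.1.rev)) (fun p => (p.2.rev, p.1.rev)) ?_ ?_ ?_ ?_ ?_
  · intro a ha
    simp only [Finset.mem_filter, Finset.mem_univ, true_and] at ha ⊢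
    exact Fin.rev_lt_rev.mpr ha
  · intro a ha
    simp only [Finset.mem_filter, Finset.mem_univ, true_and] at ha ⊢
    exact Fin.rev_lt_rev.mpr ha
  · intro a _; simp
  · intro a _; simp
  · intro a _; simp

lemma add_inv_inj {a b : ℝ} (ha0 : 0 < a) (ha1 : a < 1) (hb0 : 0 < b) (hb1 : b < 1)
    (hab : a ≠ b) : a + a⁻¹ - b - b⁻¹ ≠ 0 := by
  have key : a + a⁻¹ - b - b⁻¹ = (b - a) * (1 - a*b) / (a*b) := by
    field_simp
    ring
  rw [key]
  have h1 : (0:ℝ) < 1 - a*b := by nlinarith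
  rcases lt_or_gt_of_ne hab with h | h
  · exact ne_of_gt (div_pos (mul_pos (by linarith) h1) (by positivity))
  · exact ne_of_lt (div_neg_of_neg_of_pos (mul_neg_of_neg_of_pos (by linarith) h1) (by positivity))

section DqSection
variable (q : ℝ)

/-- `Dq q x = q^x - q^{-x}`. -/
def Dq (x : ℝ) : ℝ := q ^ x - q ^ (-x)

variable {q}

lemma Dq_neg (hq0 : 0 < q) (hq1 : q < 1) {x : ℝ} (hx : 0 < x) : Dq q x < 0 := by
  have : q ^ x < q ^ (-x) := Real.rpow_lt_rpow_of_exponent_gt hq0 hq1 (by linarith)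
  simpa [Dq] using sub_neg.mpr this

lemma Dq_ne (hq0 : 0 < q) (hq1 : q < 1) {x : ℝ} (hx : 0 < x) : Dq q x ≠ 0 :=
  ne_of_lt (Dq_neg hq0 hq1 hx)

lemma rpow_geom (hq0 : 0 < q) (hq1 : q < 1) (c : ℝ) (hc : 0 < c) (m : ℕ) :
    (q ^ c) ^ (-(m : ℤ)) * ∑ r ∈ Finset.range (2 * m + 1), (q ^ c) ^ r
      = Dq q (c * ((m : ℝ) + 1/2)) / Dq q (c / 2) := by
  have ht0 : 0 < q ^ c := Real.rpow_pos_of_pos hq0 c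
  have ht1 : q ^ c ≠ 1 := ne_of_lt (Real.rpow_lt_one hq0.le hq1 hc)
  rw [aux_geom _ ht0 ht1]
  have hm : ∀ e : ℝ, (q ^ c) ^ e = q ^ (c * e) := fun e => (Real.rpow_mul hq0.le c e).symm
  rw [hm, hm, hm, hm, Dq, Dq,
    show c * -((m:ℝ)+1/2) = -(c*((m:ℝ)+1/2)) by ring,
    show c * -((1:ℝ)/2) = -(c/2) by ring,
    show c * ((1:ℝ)/2) = c/2 by ring]

lemma detA_eq (hq0 : 0 < q) (hq1 : q < 1) {N : ℕ} (mi : Fin N → ℕ) :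
    (Matrix.of fun i j : Fin N =>
        (q ^ (((j:ℕ):ℝ) + 1/2)) ^ (-(mi i : ℤ)) *
          ∑ r ∈ Finset.range (2 * mi i + 1), (q ^ (((j:ℕ):ℝ) + 1/2)) ^ r).det
    = (∏ j : Fin N, Dq q (((mi j : ℝ) + 1/2)/2)) *
      (∏ j : Fin N, (Dq q (((((j:ℕ):ℝ)) + 1/2)/2))⁻¹) *
      ∏ i : Fin N, ∏ j ∈ Finset.Ioi i,
        ((q ^ ((mi j : ℝ) + 1/2) + (q ^ ((mi j : ℝ) + 1/2))⁻¹)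
          - (q ^ ((mi i : ℝ) + 1/2) + (q ^ ((mi i : ℝ) + 1/2))⁻¹)) := by
  set b : Fin N → ℝ := fun j => ((j:ℕ):ℝ) + 1/2 with hb
  set l : Fin N → ℝ := fun i => (mi i : ℝ) + 1/2 with hl
  have hbpos : ∀ j, 0 < b j := fun j => by positivity
  have hlpos : ∀ j, 0 < l j := fun j => by positivity
  set u : Fin N → ℝ := fun i => q ^ l i with hu
  set s : Fin N → ℝ := fun i => u i + (u i)⁻¹ with hs
  have hu0 : ∀ i, u i ≠ 0 := fun i => ne_of_gt (Real.rpow_pos_of_pos hq0 _)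
  set B1 : Matrix (Fin N) (Fin N) ℝ := Matrix.of (fun i j => Dq q (b j * l i)) with hB1
  set C : Matrix (Fin N) (Fin N) ℝ :=
    Matrix.of (fun i j : Fin N => (u j) ^ (-((i:ℕ) : ℤ)) *
      ∑ r ∈ Finset.range (2 * (i:ℕ) + 1), (u j) ^ r) with hC
  have step1 : (Matrix.of fun i j : Fin N =>
        (q ^ (((j:ℕ):ℝ) + 1/2)) ^ (-(mi i : ℤ)) *
          ∑ r ∈ Finset.range (2 * mi i + 1), (q ^ (((j:ℕ):ℝ) + 1/2)) ^ r)
      = Matrix.of (fun i j : Fin N => (Dq q (b j / 2))⁻¹ * B1 i j) := by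
    ext i j
    simp only [Matrix.of_apply, hB1]
    rw [rpow_geom hq0 hq1 (b j) (hbpos j) (mi i), div_eq_inv_mul]
  rw [step1, Matrix.det_mul_row]
  have step2 : B1.det = (∏ j, Dq q (l j / 2)) *
      ∏ i : Fin N, ∏ j ∈ Finset.Ioi i, (s j - s i) := by
    rw [← Matrix.det_transpose B1]
    have h2 : B1.transpose = Matrix.of (fun i j : Fin N => Dq q (l j / 2) * C i j) := by
      ext i j
      simp only [Matrix.transpose_apply, Matrix.of_apply, hB1, hC]
      rw [rpow_geom hq0 hq1 (l j) (hlpos j) (i:ℕ),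
        mul_comm (Dq q (l j / 2)) _,
        div_mul_cancel₀ _ (Dq_ne hq0 hq1 (by positivity : (0:ℝ) < l j / 2))]
      congr 1
      simp only [hb]
      ring
    rw [h2, Matrix.det_mul_row]
    congr 1
    rw [← Matrix.det_transpose C]
    have h3 : C.transpose = Matrix.of (fun i j : Fin N => (chebS (j:ℕ)).eval (s i)) := by
      ext i j
      simp only [Matrix.transpose_apply, Matrix.of_apply, hC]
      show _ = (chebS (j:ℕ)).eval (u i + (u i)⁻¹)
      rw [chebS_eval (u i) (hu0 i) (j:ℕ)]
    rw [h3,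
      ← Matrix.det_eval_matrixOfPolynomials_eq_det_vandermonde s (fun j : Fin N => chebS (j:ℕ))
        (fun i => (chebS_monic_deg (i:ℕ)).2) (fun i => (chebS_monic_deg (i:ℕ)).1),
      Matrix.det_vandermonde]
  rw [step2]
  ring

end DqSection

/-- Real version of `Vs`. -/
def VsR {N : ℕ} (x : Fin N → ℝ) : ℝ :=
  ∏ p ∈ Finset.univ.filter (fun p : Fin N × Fin N => p.1 < p.2),
    (x p.1 + (x p.1)⁻¹ - x p.2 - (x p.2)⁻¹)

lemma Vs_real {N : ℕ} (x : Fin N → ℝ) :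
    Vs (fun j => ((x j : ℝ) : ℂ)) = ((VsR x : ℝ) : ℂ) := by
  rw [Vs, VsR]
  push_cast
  rfl

lemma contAt_fprod {ι : Type*} (s : Finset ι) (f : ι → ℂ → ℂ) (x : ℂ)
    (h : ∀ i ∈ s, ContinuousAt (f i) x) :
    ContinuousAt (fun t => ∏ i ∈ s, f i t) x := by
  classical
  induction s using Finset.induction with
  | empty => simpa using continuousAt_const
  | insert _ _ hni ih =>
      simp only [Finset.prod_insert hni]
      exact (h _ (Finset.mem_insert_self _ _)).mul
        (ih fun i hi => h i (Finset.mem_insert_of_mem hi))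

lemma contAt_fsum {ι : Type*} (s : Finset ι) (f : ι → ℂ → ℂ) (x : ℂ)
    (h : ∀ i ∈ s, ContinuousAt (f i) x) :
    ContinuousAt (fun t => ∑ i ∈ s, f i t) x := by
  classical
  induction s using Finset.induction with
  | empty => simpa using continuousAt_const
  | insert _ _ hni ih =>
      simp only [Finset.sum_insert hni]
      exact (h _ (Finset.mem_insert_self _ _)).add
        (ih fun i hi => h i (Finset.mem_insert_of_mem hi))

lemma qcChi_eq_raw {N : ℕ} (lam : Fin N → ℤ) (z : Fin N → ℂ)
    (hz : ∀ i, z i ≠ 0) (hVs : Vs z ≠ 0) :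
    qcChi .B lam z = qcChiRaw .B lam z := by
  have hw1 : (fun i : Fin N => (1:ℂ) ^ ((i:ℕ) + 1) * z i) = z := by
    funext i; simp
  have hw : ∀ i : Fin N, ContinuousAt (fun t : ℂ => t ^ ((i:ℕ)+1) * z i) 1 :=
    fun i => ((continuous_pow _).mul continuous_const).continuousAt
  have hwv : ∀ i : Fin N, (1:ℂ) ^ ((i:ℕ)+1) * z i ≠ 0 := by
    intro i; simp [hz i]
  have hVsc : ContinuousAt (fun t : ℂ => Vs (fun i => t ^ ((i:ℕ)+1) * z i)) 1 := by
    unfold Vs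
    refine contAt_fprod _ _ _ fun p _ => ?_
    exact (((hw p.1).add ((hw p.1).inv₀ (hwv p.1))).sub (hw p.2)).sub
      ((hw p.2).inv₀ (hwv p.2))
  have hVsc1 : Vs (fun i : Fin N => (1:ℂ) ^ ((i:ℕ)+1) * z i) ≠ 0 := by rw [hw1]; exact hVs
  have hdetc : ContinuousAt (fun t : ℂ =>
      (Matrix.of fun i j : Fin N =>
        bcdEntry .B (lam i + (N : ℤ) - 1 - (i : ℕ)).toNat (t ^ ((j:ℕ)+1) * z j)).det) 1 := by
    have : ∀ t : ℂ, (Matrix.of fun i j : Fin N =>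
        bcdEntry .B (lam i + (N : ℤ) - 1 - (i : ℕ)).toNat (t ^ ((j:ℕ)+1) * z j)).det
        = ∑ σ : Equiv.Perm (Fin N), ((Equiv.Perm.sign σ : ℤ) : ℂ) *
            ∏ i : Fin N, bcdEntry .B (lam (σ i) + (N : ℤ) - 1 - ((σ i):ℕ)).toNat
              (t ^ ((i:ℕ)+1) * z i) := by
      intro t; rw [Matrix.det_apply']; rfl
    simp only [this]
    refine contAt_fsum _ _ _ fun σ _ => continuousAt_const.mul ?_
    refine contAt_fprod _ _ _ fun i _ => ?_
    show ContinuousAt ((fun w : ℂ => bcdEntry .B (lam (σ i) + (N : ℤ) - 1 - ((σ i):ℕ)).toNat w)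
      ∘ (fun t : ℂ => t ^ ((i:ℕ)+1) * z i)) 1
    refine ContinuousAt.comp ?_ (hw i)
    show ContinuousAt (fun w : ℂ => w ^ (-(((lam (σ i) + (N : ℤ) - 1 - ((σ i):ℕ)).toNat : ℕ)) : ℤ) *
      ∑ r ∈ Finset.range (2 * (lam (σ i) + (N : ℤ) - 1 - ((σ i):ℕ)).toNat + 1), w ^ r) _
    exact (continuousAt_zpow₀ _ _ (Or.inl (hwv i))).mul
      (contAt_fsum _ _ _ fun r _ => (continuous_pow r).continuousAt)
  have hcont : ContinuousAt (fun t : ℂ =>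
      qcChiRaw .B lam (fun i => t ^ ((i:ℕ)+1) * z i)) 1 := by
    unfold qcChiRaw
    exact hdetc.div hVsc hVsc1
  have hS : (1:ℂ) ∈ {t : ℂ | Vs (fun i => t ^ ((i:ℕ)+1) * z i) ≠ 0} := hVsc1
  haveI : (𝓝[{t : ℂ | Vs (fun i => t ^ ((i:ℕ)+1) * z i) ≠ 0}] (1:ℂ)).NeBot :=
    mem_closure_iff_nhdsWithin_neBot.mp (subset_closure hS)
  unfold qcChi
  rw [Tendsto.limUnder_eq (hcont.continuousWithinAt)]
  show qcChiRaw BCD.B lam (fun i : Fin N => (1:ℂ) ^ ((i:ℕ) + 1) * z i) = _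
  rw [hw1]

/-- evaluation of the type B character at the `q`-geometric point
(Proposition 2.7, type B case): with `l_i = λ_i + N − i + 1/2`,
`χ^B_λ(q^{1/2},…,q^{N−1/2}) = ∏_{i=1}^N (q^{−l_i/2} − q^{l_i/2})/(q^{−(N−i+1/2)/2} − q^{(N−i+1/2)/2})
  · V^s(q^{l_N},…,q^{l_1})/V^s(q^{1/2},…,q^{N−1/2})`. -/
theorem stmt12 (q : ℝ) (hq0 : 0 < q) (hq1 : q < 1)
    (N : ℕ) (hN : 1 ≤ N)
    (lam : Fin N → ℤ) (hlam : Antitone lam) (hlam0 : ∀ i, 0 ≤ lam i)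
    (L : Fin N → ℝ)
    (hL : ∀ i : Fin N, L i = ((lam i : ℤ) : ℝ) + (N : ℝ) - 1 - ((i : ℕ) : ℝ) + 1 / 2) :
    qcChi .B lam (fun j : Fin N => ((q : ℂ) ^ (((j : ℕ) : ℂ) + 1 / 2))) =
    (∏ i : Fin N,
        Complex.ofReal (q ^ (-(L i) / 2) - q ^ (L i / 2)) /
          Complex.ofReal
            (q ^ (-((N : ℝ) - ((i : ℕ) : ℝ) - 1 / 2) / 2) -
              q ^ (((N : ℝ) - ((i : ℕ) : ℝ) - 1 / 2) / 2))) *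
      (Vs (fun j : Fin N => Complex.ofReal (q ^ (L (Fin.rev j)))) /
        Vs (fun j : Fin N => Complex.ofReal (q ^ (((j : ℕ) : ℝ) + 1 / 2)))) := by
  have hmiR : ∀ i : Fin N, (((lam i + (N : ℤ) - 1 - (i : ℕ)).toNat : ℕ) : ℝ)
      = ((lam i : ℤ) : ℝ) + (N:ℝ) - 1 - ((i:ℕ):ℝ) := by
    intro i
    have h2 : ((i:ℕ):ℤ) < (N:ℤ) := by exact_mod_cast i.isLt
    have h1 : (0:ℤ) ≤ lam i + (N:ℤ) - 1 - (i:ℕ) := by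
      have := hlam0 i
      omega
    have h3 : (((lam i + (N : ℤ) - 1 - (i : ℕ)).toNat : ℤ) : ℝ)
        = ((lam i : ℝ) + (N:ℝ) - 1 - ((i:ℕ):ℝ)) := by
      rw [Int.toNat_of_nonneg h1]
      push_cast
      ring
    exact_mod_cast h3
  set mi : Fin N → ℕ := fun i => (lam i + (N : ℤ) - 1 - (i : ℕ)).toNat with hmi
  have hLmi : ∀ i : Fin N, L i = (mi i : ℝ) + 1/2 := by
    intro i
    rw [hL i, hmi, hmiR i]
  -- rewrite the evaluation point as a real point
  have hzfun : (fun j : Fin N => ((q : ℂ) ^ (((j : ℕ) : ℂ) + 1 / 2)))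
      = fun j : Fin N => ((q ^ (((j:ℕ):ℝ) + 1/2) : ℝ) : ℂ) := by
    funext j
    rw [Complex.ofReal_cpow hq0.le]
    norm_num
  rw [hzfun]
  have htpos : ∀ j : Fin N, (0:ℝ) < q ^ (((j:ℕ):ℝ) + 1/2) :=
    fun j => Real.rpow_pos_of_pos hq0 _
  have htlt1 : ∀ j : Fin N, q ^ (((j:ℕ):ℝ) + 1/2) < 1 :=
    fun j => Real.rpow_lt_one hq0.le hq1 (by positivity)
  have htne : ∀ i j : Fin N, i < j → q ^ (((i:ℕ):ℝ) + 1/2) ≠ q ^ (((j:ℕ):ℝ) + 1/2) := by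
    intro i j hij
    have hlt : ((i:ℕ):ℝ) < ((j:ℕ):ℝ) := by exact_mod_cast hij
    have : q ^ (((j:ℕ):ℝ) + 1/2) < q ^ (((i:ℕ):ℝ) + 1/2) :=
      Real.rpow_lt_rpow_of_exponent_gt hq0 hq1 (by linarith)
    exact (ne_of_gt this)
  have hVst : Vs (fun j : Fin N => ((q ^ (((j:ℕ):ℝ) + 1/2) : ℝ) : ℂ))
      = ((VsR (fun j : Fin N => q ^ (((j:ℕ):ℝ) + 1/2)) : ℝ) : ℂ) := Vs_real _
  have hVsRt : VsR (fun j : Fin N => q ^ (((j:ℕ):ℝ) + 1/2)) ≠ 0 := by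
    rw [VsR]
    apply Finset.prod_ne_zero_iff.mpr
    intro p hp
    simp only [Finset.mem_filter, Finset.mem_univ, true_and] at hp
    exact add_inv_inj (htpos _) (htlt1 _) (htpos _) (htlt1 _) (htne _ _ hp)
  rw [qcChi_eq_raw lam _ (fun i => Complex.ofReal_ne_zero.mpr (htpos i).ne')
    (by rw [hVst]; exact Complex.ofReal_ne_zero.mpr hVsRt)]
  unfold qcChiRaw
  -- the determinant is real
  have hmat : (Matrix.of fun i j : Fin N =>
      bcdEntry .B (lam i + (N : ℤ) - 1 - (i : ℕ)).toNat
        ((q ^ (((j:ℕ):ℝ) + 1/2) : ℝ) : ℂ)).det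
      = (((Matrix.of fun i j : Fin N =>
          (q ^ (((j:ℕ):ℝ) + 1/2)) ^ (-(mi i : ℤ)) *
            ∑ r ∈ Finset.range (2 * mi i + 1), (q ^ (((j:ℕ):ℝ) + 1/2)) ^ r).det : ℝ) : ℂ) := by
    have heq : (Matrix.of fun i j : Fin N =>
        bcdEntry .B (lam i + (N : ℤ) - 1 - (i : ℕ)).toNat
          ((q ^ (((j:ℕ):ℝ) + 1/2) : ℝ) : ℂ))
        = (Matrix.of fun i j : Fin N =>
            (q ^ (((j:ℕ):ℝ) + 1/2)) ^ (-(mi i : ℤ)) *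
              ∑ r ∈ Finset.range (2 * mi i + 1), (q ^ (((j:ℕ):ℝ) + 1/2)) ^ r).map
            Complex.ofRealHom := by
      ext i j
      simp only [Matrix.map_apply, Matrix.of_apply, bcdEntry, hmi, Complex.ofRealHom_eq_coe]
      push_cast [Complex.ofReal_zpow]
      rfl
    have heq' : Complex.ofRealHom.mapMatrix (Matrix.of fun i j : Fin N =>
            (q ^ (((j:ℕ):ℝ) + 1/2)) ^ (-(mi i : ℤ)) *
              ∑ r ∈ Finset.range (2 * mi i + 1), (q ^ (((j:ℕ):ℝ) + 1/2)) ^ r)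
        = (Matrix.of fun i j : Fin N =>
            (q ^ (((j:ℕ):ℝ) + 1/2)) ^ (-(mi i : ℤ)) *
              ∑ r ∈ Finset.range (2 * mi i + 1), (q ^ (((j:ℕ):ℝ) + 1/2)) ^ r).map
            Complex.ofRealHom := rfl
    rw [heq, ← heq', ← RingHom.map_det]
    rfl
  rw [hmat, detA_eq hq0 hq1 mi]
  -- the scalar product on the right-hand side
  have hprod : (∏ i : Fin N,
        Complex.ofReal (q ^ (-(L i) / 2) - q ^ (L i / 2)) /
          Complex.ofReal
            (q ^ (-((N : ℝ) - ((i : ℕ) : ℝ) - 1 / 2) / 2) -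
              q ^ (((N : ℝ) - ((i : ℕ) : ℝ) - 1 / 2) / 2)))
      = Complex.ofReal ((∏ j : Fin N, Dq q (((mi j : ℝ) + 1/2)/2)) *
          ∏ j : Fin N, (Dq q (((((j:ℕ):ℝ)) + 1/2)/2))⁻¹) := by
    have hfac : ∀ i : Fin N,
        Complex.ofReal (q ^ (-(L i) / 2) - q ^ (L i / 2)) /
          Complex.ofReal
            (q ^ (-((N : ℝ) - ((i : ℕ) : ℝ) - 1 / 2) / 2) -
              q ^ (((N : ℝ) - ((i : ℕ) : ℝ) - 1 / 2) / 2))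
        = Complex.ofReal (Dq q (((mi i : ℝ) + 1/2)/2) / Dq q ((((Fin.rev i : ℕ):ℝ) + 1/2)/2)) := by
      intro i
      have hrevval : (N:ℝ) - ((i:ℕ):ℝ) - 1/2 = ((Fin.rev i : ℕ):ℝ) + 1/2 := by
        have h1 : ((Fin.rev i : ℕ):ℝ) = (N:ℝ) - (((i:ℕ):ℝ) + 1) := by
          rw [Fin.val_rev]
          have : (i:ℕ) + 1 ≤ N := i.isLt
          push_cast [Nat.cast_sub this]
          ring
        rw [h1]
        ring
      have hnum : q ^ (-(L i) / 2) - q ^ (L i / 2) = -(Dq q (((mi i : ℝ) + 1/2)/2)) := by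
        rw [hLmi i, Dq, show -((mi i : ℝ) + 1/2) / 2 = -((((mi i : ℝ) + 1/2))/2) by ring]
        ring
      have hden : q ^ (-((N : ℝ) - ((i : ℕ) : ℝ) - 1 / 2) / 2) -
            q ^ (((N : ℝ) - ((i : ℕ) : ℝ) - 1 / 2) / 2)
          = -(Dq q ((((Fin.rev i : ℕ):ℝ) + 1/2)/2)) := by
        rw [hrevval, Dq,
          show -(((Fin.rev i : ℕ):ℝ) + 1/2) / 2 = -(((((Fin.rev i : ℕ):ℝ) + 1/2))/2) by ring]
        ring
      rw [hnum, hden, Complex.ofReal_neg, Complex.ofReal_neg, neg_div_neg_eq,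
        ← Complex.ofReal_div]
    rw [Finset.prod_congr rfl (fun i _ => hfac i), ← Complex.ofReal_prod]
    congr 1
    rw [Finset.prod_div_distrib]
    rw [div_eq_mul_inv, ← Finset.prod_inv_distrib]
    congr 1
    exact Fintype.prod_bijective Fin.rev Fin.rev_bijective _ _ (fun i => rfl)
  rw [hprod]
  -- the reversed Vandermonde on the right-hand side
  have hVrev : Vs (fun j : Fin N => Complex.ofReal (q ^ (L (Fin.rev j))))
      = Complex.ofReal (∏ i : Fin N, ∏ j ∈ Finset.Ioi i,
          ((q ^ ((mi j : ℝ) + 1/2) + (q ^ ((mi j : ℝ) + 1/2))⁻¹)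
            - (q ^ ((mi i : ℝ) + 1/2) + (q ^ ((mi i : ℝ) + 1/2))⁻¹))) := by
    rw [Vs_real]
    congr 1
    rw [VsR]
    have h1 : ∏ p ∈ Finset.univ.filter (fun p : Fin N × Fin N => p.1 < p.2),
          ((fun a b : Fin N => q ^ (L a) + (q ^ (L a))⁻¹ - q ^ (L b) - (q ^ (L b))⁻¹)
            p.1.rev p.2.rev)
        = ∏ p ∈ Finset.univ.filter (fun p : Fin N × Fin N => p.1 < p.2),
          ((fun a b : Fin N => q ^ (L a) + (q ^ (L a))⁻¹ - q ^ (L b) - (q ^ (L b))⁻¹)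
            p.2 p.1) :=
      prod_pairs_rev (fun a b : Fin N => q ^ (L a) + (q ^ (L a))⁻¹ - q ^ (L b) - (q ^ (L b))⁻¹)
    rw [show (∏ p ∈ Finset.univ.filter (fun p : Fin N × Fin N => p.1 < p.2),
        ((fun j : Fin N => q ^ (L (Fin.rev j))) p.1 + ((fun j : Fin N => q ^ (L (Fin.rev j))) p.1)⁻¹
          - (fun j : Fin N => q ^ (L (Fin.rev j))) p.2
          - ((fun j : Fin N => q ^ (L (Fin.rev j))) p.2)⁻¹))
        = ∏ p ∈ Finset.univ.filter (fun p : Fin N × Fin N => p.1 < p.2),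
          ((fun a b : Fin N => q ^ (L a) + (q ^ (L a))⁻¹ - q ^ (L b) - (q ^ (L b))⁻¹)
            p.1.rev p.2.rev) from rfl, h1,
      prod_pairs (fun i j : Fin N => q ^ (L j) + (q ^ (L j))⁻¹ - q ^ (L i) - (q ^ (L i))⁻¹)]
    refine Finset.prod_congr rfl fun i _ => Finset.prod_congr rfl fun j _ => ?_
    rw [hLmi i, hLmi j]
    ring
  rw [hVrev, hVst]
  rw [Complex.ofReal_mul]
  ring
end
end

section
/- Let 0 < q < 1, let M ≥ 1 be an integer, let ν ∈ GT_{M+1}, and let 1 ≤ i ≤ M. For κ ∈ GT_M define P⁺(κ | ν) = s_κ(q, q², …, q^M) / s_ν(1, q, …, q^M) if κ interlaces ν (i.e. ν_1 ≥ κ_1 ≥ ν_2 ≥ κ_2 ≥ … ≥ κ_M ≥ ν_{M+1}), and P⁺(κ | ν) = 0 otherwise. Then P⁺(·|ν) is a probability distribution on GT_M (all values are nonnegative and they sum to 1), and Σ over κ ∈ GT_M with κ_i = ν_{i+1} of P⁺(κ | ν) ≥ 1 − q^i / (q;q)_∞², where (q;q)_∞ = ∏_{n=1}^{∞}(1 −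 q^n). -/
noncomputable section
open Complex Finset Filter Topology

/-- The Schur Laurent polynomial, defined via the branching rule. -/
def qcSchur {K : Type*} [Field K] : (N : ℕ) → (Fin N → ℤ) → (Fin N → K) → K
  | 0, _, _ => 1
  | N + 1, lam, x =>
      ∑ mu ∈ Fintype.piFinset (fun i : Fin N => Finset.Icc (lam i.succ) (lam i.castSucc)),
        qcSchur N mu (fun i => x i.castSucc) *
          x (Fin.last N) ^ ((∑ i, lam i) - (∑ i, mu i))

lemma zpow_finset_sum {t : ℝ} (ht : t ≠ 0) {ι : Type*} (s : Finset ι) (g : ι → ℤ) :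
    t ^ (∑ i ∈ s, g i) = ∏ i ∈ s, t ^ g i := by
  induction s using Finset.cons_induction with
  | empty => simp
  | cons a s ha ih => rw [Finset.sum_cons, Finset.prod_cons, zpow_add₀ ht, ih]

lemma sum_zpow_reflect {t : ℝ} (ht : t ≠ 0) (a b : ℤ) :
    ∑ m ∈ Finset.Icc a b, t⁻¹ ^ m = t ^ (-(a+b)) * ∑ m ∈ Finset.Icc a b, t ^ m := by
  rw [Finset.mul_sum]
  refine Finset.sum_nbij' (fun m => a + b - m) (fun m => a + b - m) ?_ ?_ ?_ ?_ ?_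
  · intro m hm; simp only [Finset.mem_Icc] at *; omega
  · intro m hm; simp only [Finset.mem_Icc] at *; omega
  · intro m hm; omega
  · intro m hm; omega
  · intro m hm
    rw [inv_zpow, ← zpow_neg, ← zpow_add₀ ht]
    congr 1; ring

lemma coefid {y z : ℝ} (hy : y ≠ 0) (hz : z ≠ 0) (u v : ℤ) :
    y ^ (-v) * z ^ u * (z/y) ^ (-(u+v)) = z ^ (-v) * y ^ u := by
  have h1 : (z/y) ^ (-(u+v)) = (y^u * y^v) / (z^u * z^v) := by
    rw [zpow_neg, div_zpow, inv_div, ← zpow_add₀ hy, ← zpow_add₀ hz]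
  rw [h1, zpow_neg, zpow_neg]
  field_simp

abbrev itl (N : ℕ) (lam : Fin (N+1) → ℤ) : Finset (Fin N → ℤ) :=
  Fintype.piFinset (fun i : Fin N => Finset.Icc (lam i.succ) (lam i.castSucc))

def Af (N : ℕ) (lam : Fin (N+2) → ℤ) (rho : Fin N → ℤ) : Fin (N+1) → ℤ :=
  Fin.lastCases (lam (Fin.last (N+1))) (fun j => max (lam j.castSucc.succ) (rho j))

def Bf (N : ℕ) (lam : Fin (N+2) → ℤ) (rho : Fin N → ℤ) : Fin (N+1) → ℤ :=
  Fin.cases (lam 0) (fun j => min (lam j.succ.castSucc) (rho j))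

@[simp] lemma Af_cast (N : ℕ) (lam : Fin (N+2) → ℤ) (rho : Fin N → ℤ) (j : Fin N) :
    Af N lam rho j.castSucc = max (lam j.castSucc.succ) (rho j) := by
  simp [Af]

@[simp] lemma Af_last (N : ℕ) (lam : Fin (N+2) → ℤ) (rho : Fin N → ℤ) :
    Af N lam rho (Fin.last N) = lam (Fin.last (N+1)) := by
  simp [Af]

@[simp] lemma Bf_zero (N : ℕ) (lam : Fin (N+2) → ℤ) (rho : Fin N → ℤ) :
    Bf N lam rho 0 = lam 0 := by simp [Bf]

@[simp] lemma Bf_succ (N : ℕ) (lam : Fin (N+2) → ℤ) (rho : Fin N → ℤ) (j : Fin N) :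
    Bf N lam rho j.succ = min (lam j.succ.castSucc) (rho j) := by
  simp [Bf]

abbrev Rf (N : ℕ) (lam : Fin (N+2) → ℤ) : Finset (Fin N → ℤ) :=
  Fintype.piFinset (fun j : Fin N => Finset.Icc (lam j.succ.succ) (lam j.castSucc.castSucc))

abbrev Qf (N : ℕ) (lam : Fin (N+2) → ℤ) (rho : Fin N → ℤ) : Finset (Fin (N+1) → ℤ) :=
  Fintype.piFinset (fun k : Fin (N+1) => Finset.Icc (Af N lam rho k) (Bf N lam rho k))

lemma itl_sub_R {N : ℕ} {lam : Fin (N+2) → ℤ} {mu : Fin (N+1) → ℤ}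
    (hmu : mu ∈ itl (N+1) lam) : itl N mu ⊆ Rf N lam := by
  intro rho hrho
  refine Fintype.mem_piFinset.2 fun j => Finset.mem_Icc.2 ⟨?_, ?_⟩
  · have h1 := Finset.mem_Icc.1 (Fintype.mem_piFinset.1 hrho j)
    have h2 := Finset.mem_Icc.1 (Fintype.mem_piFinset.1 hmu j.succ)
    omega
  · have h1 := Finset.mem_Icc.1 (Fintype.mem_piFinset.1 hrho j)
    have h2 := Finset.mem_Icc.1 (Fintype.mem_piFinset.1 hmu j.castSucc)
    omega

lemma Q_sub_itl {N : ℕ} {lam : Fin (N+2) → ℤ} {rho : Fin N → ℤ} {mu : Fin (N+1) → ℤ}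
    (hmu : mu ∈ Qf N lam rho) : mu ∈ itl (N+1) lam := by
  refine Fintype.mem_piFinset.2 fun k => Finset.mem_Icc.2 ⟨?_, ?_⟩
  · have h := Finset.mem_Icc.1 (Fintype.mem_piFinset.1 hmu k)
    refine le_trans ?_ h.1
    induction k using Fin.lastCases with
    | last => rw [Af_last, Fin.succ_last]
    | cast j => rw [Af_cast, Fin.succ_castSucc]; exact le_max_left _ _
  · have h := Finset.mem_Icc.1 (Fintype.mem_piFinset.1 hmu k)
    refine le_trans h.2 ?_
    induction k using Fin.cases with
    | zero => rw [Bf_zero, Fin.castSucc_zero]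
    | succ j => rw [Bf_succ]; exact min_le_left _ _

lemma mem_equiv {N : ℕ} {lam : Fin (N+2) → ℤ} {mu : Fin (N+1) → ℤ} (rho : Fin N → ℤ)
    (hmu : mu ∈ itl (N+1) lam) : rho ∈ itl N mu ↔ mu ∈ Qf N lam rho := by
  have hm := fun i => Finset.mem_Icc.1 (Fintype.mem_piFinset.1 hmu i)
  constructor
  · intro h
    have hr := fun j => Finset.mem_Icc.1 (Fintype.mem_piFinset.1 h j)
    refine Fintype.mem_piFinset.2 fun k => Finset.mem_Icc.2 ⟨?_, ?_⟩
    · induction k using Fin.lastCases with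
      | last => rw [Af_last, ← Fin.succ_last]; exact (hm (Fin.last N)).1
      | cast j =>
          rw [Af_cast, Fin.succ_castSucc]
          exact max_le ((hm j.castSucc).1) ((hr j).2)
    · induction k using Fin.cases with
      | zero => rw [Bf_zero]; exact (hm 0).2
      | succ j => rw [Bf_succ]; exact le_min ((hm j.succ).2) ((hr j).1)
  · intro h
    have hq := fun k => Finset.mem_Icc.1 (Fintype.mem_piFinset.1 h k)
    refine Fintype.mem_piFinset.2 fun j => Finset.mem_Icc.2 ⟨?_, ?_⟩
    · have := (hq j.succ).2
      rw [Bf_succ] at this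
      exact le_trans this (min_le_right _ _)
    · have := (hq j.castSucc).1
      rw [Af_cast] at this
      exact le_trans (le_max_right _ _) this

lemma keysum {N : ℕ} (lam : Fin (N+2) → ℤ) (rho : Fin N → ℤ) :
    (∑ k, Af N lam rho k) + (∑ k, Bf N lam rho k) = (∑ i, lam i) + (∑ j, rho j) := by
  rw [Fin.sum_univ_castSucc (f := Af N lam rho), Fin.sum_univ_succ (f := Bf N lam rho),
    Fin.sum_univ_succ (f := lam)]
  simp only [Af_cast, Af_last, Bf_zero, Bf_succ]
  rw [Fin.sum_univ_castSucc (f := fun k : Fin (N+1) => lam k.succ)]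
  have hs : (∑ j : Fin N, max (lam j.castSucc.succ) (rho j))
      + (∑ j : Fin N, min (lam j.succ.castSucc) (rho j))
      = (∑ j : Fin N, lam j.castSucc.succ) + (∑ j : Fin N, rho j) := by
    rw [← Finset.sum_add_distrib, ← Finset.sum_add_distrib]
    refine Finset.sum_congr rfl fun j _ => ?_
    rw [Fin.succ_castSucc, max_add_min]
  have hlast : (Fin.last N).succ = Fin.last (N+1) := Fin.succ_last N
  rw [hlast]
  omega

lemma expand (N : ℕ) (f : (Fin N → ℤ) → ℝ) (lam : Fin (N+2) → ℤ) {y z : ℝ}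
    (hy : y ≠ 0) (hz : z ≠ 0) :
    ∑ mu ∈ itl (N+1) lam,
        (∑ rho ∈ itl N mu, f rho * z ^ ((∑ i, mu i) - (∑ i, rho i)))
          * y ^ ((∑ i, lam i) - (∑ i, mu i))
    = ∑ rho ∈ Rf N lam, f rho * (z ^ (-(∑ j, rho j)) * y ^ (∑ i, lam i) *
        ∏ k : Fin (N+1), ∑ m ∈ Finset.Icc (Af N lam rho k) (Bf N lam rho k), (z/y) ^ m) := by
  have step1 : ∀ mu ∈ itl (N+1) lam,
      (∑ rho ∈ itl N mu, f rho * z ^ ((∑ i, mu i) - (∑ i, rho i)))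
        * y ^ ((∑ i, lam i) - (∑ i, mu i))
      = ∑ rho ∈ Rf N lam, (if rho ∈ itl N mu then
          f rho * z ^ ((∑ i, mu i) - (∑ i, rho i)) * y ^ ((∑ i, lam i) - (∑ i, mu i)) else 0) := by
    intro mu hmu
    rw [Finset.sum_ite_mem, Finset.sum_mul,
      Finset.inter_eq_right.2 (itl_sub_R hmu)]
  rw [Finset.sum_congr rfl step1, Finset.sum_comm]
  refine Finset.sum_congr rfl fun rho hrho => ?_
  have step2 : ∀ mu ∈ itl (N+1) lam,
      (if rho ∈ itl N mu then
          f rho * z ^ ((∑ i, mu i) - (∑ i, rho i)) * y ^ ((∑ i, lam i) - (∑ i, mu i)) else 0)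
      = (if mu ∈ Qf N lam rho then
          f rho * z ^ ((∑ i, mu i) - (∑ i, rho i)) * y ^ ((∑ i, lam i) - (∑ i, mu i)) else 0) := by
    intro mu hmu
    rw [if_congr (mem_equiv rho hmu) rfl rfl]
  rw [Finset.sum_congr rfl step2, Finset.sum_ite_mem,
    Finset.inter_eq_right.2 (fun mu hmu => Q_sub_itl hmu)]
  rw [Finset.prod_univ_sum, Finset.mul_sum, Finset.mul_sum]
  refine Finset.sum_congr rfl fun mu hmu => ?_
  have hprod : ∏ k : Fin (N+1), (z/y) ^ (mu k) = (z/y) ^ (∑ i, mu i) :=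
    (zpow_finset_sum (div_ne_zero hz hy) _ _).symm
  rw [hprod, sub_eq_add_neg ((∑ i : Fin (N+1), mu i)), sub_eq_add_neg ((∑ i, lam i)),
    zpow_add₀ hz, zpow_add₀ hy, div_zpow, div_eq_mul_inv, ← zpow_neg]
  ring

lemma double_swap (N : ℕ) (f : (Fin N → ℤ) → ℝ) (lam : Fin (N+2) → ℤ) {y z : ℝ}
    (hy : y ≠ 0) (hz : z ≠ 0) :
    ∑ mu ∈ itl (N+1) lam,
        (∑ rho ∈ itl N mu, f rho * z ^ ((∑ i, mu i) - (∑ i, rho i)))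
          * y ^ ((∑ i, lam i) - (∑ i, mu i))
    = ∑ mu ∈ itl (N+1) lam,
        (∑ rho ∈ itl N mu, f rho * y ^ ((∑ i, mu i) - (∑ i, rho i)))
          * z ^ ((∑ i, lam i) - (∑ i, mu i)) := by
  rw [expand N f lam hy hz, expand N f lam hz hy]
  refine Finset.sum_congr rfl fun rho hrho => ?_
  congr 1
  symm
  have hrefl : ∀ k : Fin (N+1),
      ∑ m ∈ Finset.Icc (Af N lam rho k) (Bf N lam rho k), (y/z) ^ m
      = (z/y) ^ (-(Af N lam rho k + Bf N lam rho k)) *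
        ∑ m ∈ Finset.Icc (Af N lam rho k) (Bf N lam rho k), (z/y) ^ m := by
    intro k
    rw [← sum_zpow_reflect (div_ne_zero hz hy)]
    congr 1
    rw [inv_div]
  calc y ^ (-(∑ j, rho j)) * z ^ (∑ i, lam i) *
        ∏ k : Fin (N+1), ∑ m ∈ Finset.Icc (Af N lam rho k) (Bf N lam rho k), (y/z) ^ m
      = y ^ (-(∑ j, rho j)) * z ^ (∑ i, lam i) *
        ((z/y) ^ (-((∑ i, lam i) + (∑ j, rho j))) *
         ∏ k : Fin (N+1), ∑ m ∈ Finset.Icc (Af N lam rho k) (Bf N lam rho k), (z/y) ^ m) := by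
        rw [Finset.prod_congr rfl fun k _ => hrefl k, Finset.prod_mul_distrib]
        congr 2
        rw [← zpow_finset_sum (div_ne_zero hz hy)]
        congr 1
        rw [← keysum lam rho, neg_add]
        rw [← Finset.sum_neg_distrib, ← Finset.sum_neg_distrib, ← Finset.sum_add_distrib]
        exact Finset.sum_congr rfl fun k _ => by ring
    _ = z ^ (-(∑ j, rho j)) * y ^ (∑ i, lam i) *
        ∏ k : Fin (N+1), ∑ m ∈ Finset.Icc (Af N lam rho k) (Bf N lam rho k), (z/y) ^ m := by
        rw [← mul_assoc]
        congr 1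
        exact coefid hy hz _ _

lemma qcSchur_succ {K : Type*} [Field K] (N : ℕ) (lam : Fin (N+1) → ℤ) (x : Fin (N+1) → K) :
    qcSchur (N+1) lam x = ∑ mu ∈ itl N lam,
      qcSchur N mu (fun i => x i.castSucc) * x (Fin.last N) ^ ((∑ i, lam i) - (∑ i, mu i)) := by
  rw [qcSchur]

lemma qcSchur_swap_last (N : ℕ) (lam : Fin (N+2) → ℤ) (x : Fin (N+2) → ℝ)
    (hx : ∀ j, x j ≠ 0) :
    qcSchur (N+2) lam (x ∘ Equiv.swap ((Fin.last N).castSucc) (Fin.last (N+1)))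
      = qcSchur (N+2) lam x := by
  set p : Fin (N+2) := (Fin.last N).castSucc with hp
  set l : Fin (N+2) := Fin.last (N+1) with hl
  set σ := Equiv.swap p l with hσ
  have hne : ∀ j : Fin N, j.castSucc.castSucc ≠ p ∧ j.castSucc.castSucc ≠ l := by
    intro j
    have := j.isLt
    constructor <;>
      · refine Fin.ne_of_val_ne ?_
        simp only [hp, hl, Fin.coe_castSucc, Fin.val_last]
        omega
  have hL : ∀ mu : Fin (N+1) → ℤ,
      qcSchur (N+1) mu (fun i => (x ∘ σ) i.castSucc)
      = ∑ rho ∈ itl N mu, qcSchur N rho (fun j => x j.castSucc.castSucc)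
          * (x l) ^ ((∑ i, mu i) - (∑ i, rho i)) := by
    intro mu
    rw [qcSchur_succ]
    refine Finset.sum_congr rfl fun rho _ => ?_
    congr 1
    · congr 1
      funext j
      show x (σ j.castSucc.castSucc) = x j.castSucc.castSucc
      rw [hσ, Equiv.swap_apply_of_ne_of_ne (hne j).1 (hne j).2]
    · show (x (σ ((Fin.last N).castSucc))) ^ _ = _
      rw [hσ, ← hp, Equiv.swap_apply_left]
  have hR : ∀ mu : Fin (N+1) → ℤ,
      qcSchur (N+1) mu (fun i => x i.castSucc)
      = ∑ rho ∈ itl N mu, qcSchur N rho (fun j => x j.castSucc.castSucc)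
          * (x p) ^ ((∑ i, mu i) - (∑ i, rho i)) := by
    intro mu
    rw [qcSchur_succ]
  have hlast : (x ∘ σ) (Fin.last (N+1)) = x p := by
    show x (σ l) = x p
    rw [hσ, Equiv.swap_apply_right]
  rw [qcSchur_succ, qcSchur_succ]
  simp only [hL, hR, hlast]
  exact double_swap N _ lam (hx p) (hx l)

lemma qcSchur_swap_adj : ∀ (N : ℕ) (lam : Fin N → ℤ) (x : Fin N → ℝ), (∀ j, x j ≠ 0) →
    ∀ (a b : Fin N), (a:ℕ)+1 = (b:ℕ) →
    qcSchur N lam (x ∘ Equiv.swap a b) = qcSchur N lam x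
  | 0, lam, x, hx, a, b, hab => a.elim0
  | 1, lam, x, hx, a, b, hab => by
      have := a.isLt; have := b.isLt; omega
  | N+2, lam, x, hx, a, b, hab => by
      by_cases hb : (b:ℕ) = N+1
      · have ha' : a = (Fin.last N).castSucc := by
          rw [Fin.ext_iff]; simp only [Fin.coe_castSucc, Fin.val_last]; omega
        have hb' : b = Fin.last (N+1) := by
          rw [Fin.ext_iff]; simp only [Fin.val_last]; omega
        rw [ha', hb']
        exact qcSchur_swap_last N lam x hx
      · have hblt : (b:ℕ) < N+1 := by have := b.isLt; omega
        set a' : Fin (N+1) := ⟨a, by omega⟩ with ha'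
        set b' : Fin (N+1) := ⟨b, by omega⟩ with hb'
        have haa : a = a'.castSucc := by rw [Fin.ext_iff]; rfl
        have hbb : b = b'.castSucc := by rw [Fin.ext_iff]; rfl
        rw [qcSchur_succ, qcSchur_succ]
        refine Finset.sum_congr rfl fun mu _ => ?_
        congr 1
        · have hfun : (fun k : Fin (N+1) => (x ∘ Equiv.swap a b) k.castSucc)
              = (fun k : Fin (N+1) => x k.castSucc) ∘ Equiv.swap a' b' := by
            funext k
            show x (Equiv.swap a b k.castSucc) = x ((Equiv.swap a' b' k).castSucc)
            congr 1
            rcases eq_or_ne k a' with rfl | hka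
            · rw [← haa, Equiv.swap_apply_left, Equiv.swap_apply_left, hbb]
            · rcases eq_or_ne k b' with rfl | hkb
              · rw [← hbb, Equiv.swap_apply_right, Equiv.swap_apply_right, haa]
              · rw [Equiv.swap_apply_of_ne_of_ne (by rw [haa]; exact fun h => hka (Fin.castSucc_injective _ h)) (by rw [hbb]; exact fun h => hkb (Fin.castSucc_injective _ h)),
                  Equiv.swap_apply_of_ne_of_ne hka hkb]
          rw [hfun]
          exact qcSchur_swap_adj (N+1) mu (fun k => x k.castSucc) (fun k => hx _) a' b'
            (by simp only [ha', hb']; omega)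
        · congr 1
          show x (Equiv.swap a b (Fin.last (N+1))) = x (Fin.last (N+1))
          congr 1
          refine Equiv.swap_apply_of_ne_of_ne ?_ ?_ <;>
            · simp only [ne_eq, Fin.ext_iff, Fin.val_last]; omega

lemma qcSchur_swap_gen (N : ℕ) (lam : Fin N → ℤ) : ∀ (d : ℕ) (x : Fin N → ℝ),
    (∀ j, x j ≠ 0) → ∀ (a b : Fin N), (b:ℕ) = (a:ℕ) + d + 1 →
    qcSchur N lam (x ∘ Equiv.swap a b) = qcSchur N lam x := by
  intro d
  induction d with
  | zero =>
      intro x hx a b hb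
      exact qcSchur_swap_adj N lam x hx a b (by omega)
  | succ d ih =>
      intro x hx a b hb
      have hblt := b.isLt
      set c : Fin N := ⟨(b:ℕ) - 1, by omega⟩ with hc
      have hac : (c:ℕ) = (a:ℕ) + d + 1 := by simp only [hc]; omega
      have hcb : (c:ℕ) + 1 = (b:ℕ) := by simp only [hc]; omega
      have hanec : a ≠ c := by simp only [ne_eq, Fin.ext_iff]; omega
      have haneb : a ≠ b := by simp only [ne_eq, Fin.ext_iff]; omega
      have hswap : Equiv.swap a b = Equiv.swap c b * Equiv.swap a c * Equiv.swap c b := by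
        have h1 : Equiv.swap c b a = a := Equiv.swap_apply_of_ne_of_ne hanec haneb
        have h2 : Equiv.swap c b c = b := Equiv.swap_apply_left _ _
        calc Equiv.swap a b = Equiv.swap (Equiv.swap c b a) (Equiv.swap c b c) := by rw [h1, h2]
          _ = Equiv.swap c b * Equiv.swap a c * (Equiv.swap c b)⁻¹ := Equiv.swap_apply_apply _ _ _
          _ = Equiv.swap c b * Equiv.swap a c * Equiv.swap c b := by rw [Equiv.swap_inv]
      have hcomp : x ∘ Equiv.swap a b
          = ((x ∘ Equiv.swap c b) ∘ Equiv.swap a c) ∘ Equiv.swap c b := by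
        rw [hswap]; rfl
      rw [hcomp]
      rw [qcSchur_swap_adj N lam ((x ∘ ⇑(Equiv.swap c b)) ∘ ⇑(Equiv.swap a c))
        (fun k => hx _) c b hcb]
      rw [ih (x ∘ ⇑(Equiv.swap c b)) (fun k => hx _) a c hac]
      rw [qcSchur_swap_adj N lam x hx c b hcb]

lemma qcSchur_swap' (N : ℕ) (lam : Fin N → ℤ) (x : Fin N → ℝ) (hx : ∀ j, x j ≠ 0)
    (a b : Fin N) (hab : a ≠ b) :
    qcSchur N lam (x ∘ Equiv.swap a b) = qcSchur N lam x := by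
  rcases lt_trichotomy (a:ℕ) (b:ℕ) with h | h | h
  · exact qcSchur_swap_gen N lam ((b:ℕ) - (a:ℕ) - 1) x hx a b (by omega)
  · exact absurd (Fin.ext h) hab
  · rw [Equiv.swap_comm]
    exact qcSchur_swap_gen N lam ((a:ℕ) - (b:ℕ) - 1) x hx b a (by omega)

lemma qcSchur_perm (N : ℕ) (lam : Fin N → ℤ) (σ : Equiv.Perm (Fin N)) :
    ∀ x : Fin N → ℝ, (∀ j, x j ≠ 0) → qcSchur N lam (x ∘ σ) = qcSchur N lam x := by
  refine Equiv.Perm.swap_induction_on σ ?_ ?_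
  · intro x hx
    rfl
  · intro f a b hab ih x hx
    have : x ∘ ⇑(Equiv.swap a b * f) = (x ∘ Equiv.swap a b) ∘ f := rfl
    rw [this, ih (x ∘ Equiv.swap a b) (fun k => hx _),
      qcSchur_swap' N lam x hx a b hab]

lemma branch_first (M : ℕ) (q : ℝ) (hq : q ≠ 0) (nu : Fin (M+1) → ℤ) :
    qcSchur (M+1) nu (fun j : Fin (M+1) => q ^ (j:ℕ))
    = ∑ ka ∈ itl M nu, qcSchur M ka (fun j : Fin M => q ^ ((j:ℕ)+1)) := by
  have hrot : qcSchur (M+1) nu ((fun j : Fin (M+1) => q ^ (j:ℕ)) ∘ (finRotate (M+1)))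
      = qcSchur (M+1) nu (fun j : Fin (M+1) => q ^ (j:ℕ)) :=
    qcSchur_perm (M+1) nu (finRotate (M+1)) _ (fun j => pow_ne_zero _ hq)
  rw [← hrot, qcSchur_succ]
  refine Finset.sum_congr rfl fun ka hka => ?_
  have h1 : (fun i : Fin M =>
      ((fun j : Fin (M+1) => q ^ (j:ℕ)) ∘ (finRotate (M+1))) i.castSucc)
      = fun j : Fin M => q ^ ((j:ℕ)+1) := by
    funext i
    show q ^ ((finRotate (M+1) i.castSucc : Fin (M+1)) : ℕ) = _
    congr 1
    rw [finRotate_succ_apply]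
    exact Fin.val_add_one_of_lt (Fin.castSucc_lt_last i)
  have h2 : ((fun j : Fin (M+1) => q ^ (j:ℕ)) ∘ (finRotate (M+1))) (Fin.last M) = 1 := by
    show q ^ ((finRotate (M+1) (Fin.last M) : Fin (M+1)) : ℕ) = 1
    rw [finRotate_last]
    simp
  rw [h1, h2, one_zpow, mul_one]

lemma cond_iff (M : ℕ) (nu : Fin (M+1) → ℤ) (ka : Fin M → ℤ) :
    (∀ j : Fin M, ka j ≤ nu j.castSucc ∧ nu j.succ ≤ ka j) ↔ ka ∈ itl M nu := by
  rw [Fintype.mem_piFinset]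
  simp only [Finset.mem_Icc]
  exact forall_congr' fun j => and_comm

lemma qcSchur_nonneg : ∀ (N : ℕ) (lam : Fin N → ℤ) (x : Fin N → ℝ),
    (∀ j, 0 < x j) → 0 ≤ qcSchur N lam x
  | 0, lam, x, hx => by rw [qcSchur]; norm_num
  | N+1, lam, x, hx => by
      rw [qcSchur_succ]
      refine Finset.sum_nonneg fun mu _ => mul_nonneg
        (qcSchur_nonneg N mu _ (fun j => hx _)) (le_of_lt (zpow_pos (hx _) _))

lemma mem_itl_antitone {N : ℕ} {lam : Fin (N+1) → ℤ} {mu : Fin N → ℤ}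
    (hlam : Antitone lam) (hmu : mu ∈ itl N lam) : Antitone mu := by
  intro j k hjk
  rcases eq_or_lt_of_le hjk with h | h
  · exact le_of_eq (by rw [h])
  · have h1 := (Fintype.mem_piFinset.1 hmu k)
    have h2 := (Fintype.mem_piFinset.1 hmu j)
    simp only [Finset.mem_Icc] at h1 h2
    refine le_trans h1.2 (le_trans (hlam ?_) h2.1)
    · -- j.succ ≤ k.castSucc
      simp only [Fin.le_def, Fin.val_succ, Fin.coe_castSucc]
      omega

lemma qcSchur_pos : ∀ (N : ℕ) (lam : Fin N → ℤ) (x : Fin N → ℝ),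
    Antitone lam → (∀ j, 0 < x j) → 0 < qcSchur N lam x
  | 0, lam, x, _, hx => by rw [qcSchur]; norm_num
  | N+1, lam, x, hlam, hx => by
      rw [qcSchur_succ]
      refine Finset.sum_pos' (fun mu _ => mul_nonneg
        (qcSchur_nonneg N mu _ (fun j => hx _)) (le_of_lt (zpow_pos (hx _) _))) ?_
      refine ⟨fun i => lam i.castSucc, ?_, ?_⟩
      · refine Fintype.mem_piFinset.2 fun j => Finset.mem_Icc.2 ⟨hlam ?_, le_refl _⟩
        simp [Fin.le_def]
      · exact mul_pos (qcSchur_pos N _ _ (fun j k h => hlam (Fin.castSucc_le_castSucc_iff.2 h))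
          (fun j => hx _)) (zpow_pos (hx _) _)


lemma sum_update_sub_one {N : ℕ} (f : Fin N → ℤ) (r : Fin N) :
    (∑ i, Function.update f r (f r - 1) i) = (∑ i, f i) - 1 := by
  rw [Finset.sum_update_of_mem (Finset.mem_univ r)]
  have h := Finset.add_sum_erase Finset.univ f (Finset.mem_univ r)
  rw [← Finset.sdiff_singleton_eq_erase] at h
  omega

lemma antitone_update_sub_one {N : ℕ} {f : Fin N → ℤ} (hf : Antitone f) (r : Fin N)
    (h : ∀ k, r < k → f k < f r) :
    Antitone (Function.update f r (f r - 1)) := by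
  intro j k hjk
  simp only [Function.update_apply]
  rcases eq_or_ne j r with rfl | hj
  · rcases eq_or_ne k j with rfl | hk
    · simp
    · rw [if_neg hk, if_pos rfl]
      exact Int.le_sub_one_of_lt (h k (lt_of_le_of_ne hjk (fun h' => hk h'.symm)))
  · rw [if_neg hj]
    rcases eq_or_ne k r with rfl | hk
    · rw [if_pos rfl]
      have := hf hjk
      omega
    · rw [if_neg hk]
      exact hf hjk

lemma keyBound (q : ℝ) (hq0 : 0 < q) (hq1 : q < 1) :
    ∀ (N : ℕ) (ka : Fin N → ℤ) (r : Fin N), Antitone ka →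
      Antitone (Function.update ka r (ka r - 1)) →
      qcSchur N ka (fun j : Fin N => q ^ ((j:ℕ)+1))
        ≤ (q ^ ((r:ℕ)+1) - q ^ (N+1)) / (1-q) *
          qcSchur N (Function.update ka r (ka r - 1)) (fun j : Fin N => q ^ ((j:ℕ)+1))
  | 0, ka, r, _, _ => r.elim0
  | N+1, ka, r, hka, hka' => by
    have h1q : (0:ℝ) < 1 - q := by linarith
    set ka' := Function.update ka r (ka r - 1) with hka'def
    have hSka' : (∑ i, ka' i) = (∑ i, ka i) - 1 := sum_update_sub_one ka r
    set c : ℝ := q ^ (N+1) with hc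
    have hcpos : (0:ℝ) < c := pow_pos hq0 _
    set G : (Fin N → ℤ) → ℝ := fun mu => qcSchur N mu (fun j : Fin N => q ^ ((j:ℕ)+1)) with hG
    have hGnn : ∀ mu, 0 ≤ G mu := fun mu => qcSchur_nonneg N mu _ (fun j => pow_pos hq0 _)
    have hexpand : ∀ la : Fin (N+1) → ℤ,
        qcSchur (N+1) la (fun j : Fin (N+1) => q ^ ((j:ℕ)+1))
        = ∑ mu ∈ itl N la, G mu * c ^ ((∑ i, la i) - (∑ i, mu i)) := by
      intro la
      rw [qcSchur_succ]
      refine Finset.sum_congr rfl fun mu _ => ?_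
      simp only [Fin.coe_castSucc, Fin.val_last]
      rfl
    rw [hexpand, hexpand]
    have hstep1 : ∀ mu : Fin N → ℤ, G mu * c ^ ((∑ i, ka i) - (∑ i, mu i))
        = c * (G mu * c ^ ((∑ i, ka' i) - (∑ i, mu i))) := by
      intro mu
      rw [hSka']
      have h2 : c ^ ((∑ i, ka i) - (∑ i, mu i))
          = c ^ (1 + ((∑ i, ka i) - 1 - (∑ i, mu i))) := by
        congr 1
        ring
      rw [h2, zpow_add₀ (ne_of_gt hcpos), zpow_one]
      ring
    have hFnn : ∀ (la : Fin (N+1) → ℤ) (s : Finset (Fin N → ℤ)), s ⊆ itl N la →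
        ∑ mu ∈ s, G mu * c ^ ((∑ i, la i) - (∑ i, mu i))
          ≤ ∑ mu ∈ itl N la, G mu * c ^ ((∑ i, la i) - (∑ i, mu i)) := by
      intro la s hs
      exact Finset.sum_le_sum_of_subset_of_nonneg hs fun mu _ _ =>
        mul_nonneg (hGnn mu) (le_of_lt (zpow_pos hcpos _))
    rcases eq_or_ne r (Fin.last N) with rfl | hrlast
    · -- r is the last index
      have hsub : itl N ka ⊆ itl N ka' := by
        intro mu hmu
        refine Fintype.mem_piFinset.2 fun j => Finset.mem_Icc.2 ?_
        have h := Finset.mem_Icc.1 (Fintype.mem_piFinset.1 hmu j)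
        have hne : j.castSucc ≠ Fin.last N := (Fin.castSucc_lt_last j).ne
        rw [hka'def, Function.update_apply, Function.update_apply, if_neg hne]
        constructor
        · by_cases h1 : j.succ = Fin.last N
          · rw [if_pos h1, ← h1]
            omega
          · rw [if_neg h1]
            exact h.1
        · exact h.2
      have hCeq : (q ^ (((Fin.last N : Fin (N+1)):ℕ)+1) - q ^ (N+1+1)) / (1-q) = c := by
        rw [Fin.val_last, hc]
        field_simp
        ring
      rw [hCeq]
      calc ∑ mu ∈ itl N ka, G mu * c ^ ((∑ i, ka i) - (∑ i, mu i))
          = c * ∑ mu ∈ itl N ka, G mu * c ^ ((∑ i, ka' i) - (∑ i, mu i)) := by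
            rw [Finset.mul_sum]
            exact Finset.sum_congr rfl fun mu _ => hstep1 mu
        _ ≤ c * ∑ mu ∈ itl N ka', G mu * c ^ ((∑ i, ka' i) - (∑ i, mu i)) :=
            mul_le_mul_of_nonneg_left (hFnn ka' _ hsub) (le_of_lt hcpos)
    · -- r is not the last index
      have hrlt : (r:ℕ) < N := by
        have h1 := r.isLt
        rcases Nat.lt_or_ge (r:ℕ) N with h | h
        · exact h
        · exact absurd (Fin.ext (by simp only [Fin.val_last]; omega)) hrlast
      set r' : Fin N := ⟨r, hrlt⟩ with hr'
      have hrr' : r = r'.castSucc := by rw [Fin.ext_iff]; rfl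
      have hstep : ka r'.succ ≤ ka r - 1 := by
        have h1 : ka' r'.succ ≤ ka' r := hka' (by rw [hrr']; exact Fin.castSucc_le_succ r')
        have h2 : r'.succ ≠ r := by
          rw [hrr']; simp only [ne_eq, Fin.ext_iff, Fin.val_succ, Fin.coe_castSucc]; omega
        rw [hka'def, Function.update_apply, if_neg h2, Function.update_apply, if_pos rfl] at h1
        exact h1
      set s2 := (itl N ka).filter (fun mu => mu r' = ka r) with hs2
      set s1 := (itl N ka).filter (fun mu => ¬ (mu r' = ka r)) with hs1
      have hmuup : ∀ mu ∈ itl N ka, mu r' ≤ ka r := by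
        intro mu hmu
        have h := Finset.mem_Icc.1 (Fintype.mem_piFinset.1 hmu r')
        rw [hrr']
        exact h.2
      have hs1sub : s1 ⊆ itl N ka' := by
        intro mu hmu
        rw [hs1, Finset.mem_filter] at hmu
        obtain ⟨hmem, hne⟩ := hmu
        have hlt : mu r' ≤ ka r - 1 := by
          have := hmuup mu hmem; omega
        refine Fintype.mem_piFinset.2 fun j => Finset.mem_Icc.2 ?_
        have h := Finset.mem_Icc.1 (Fintype.mem_piFinset.1 hmem j)
        rw [hka'def, Function.update_apply, Function.update_apply]
        constructor
        · by_cases h1 : j.succ = r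
          · rw [if_pos h1, ← h1]
            omega
          · rw [if_neg h1]
            exact h.1
        · by_cases h1 : j.castSucc = r
          · rw [if_pos h1]
            have hjr : j = r' := by
              rw [hrr'] at h1
              exact Fin.castSucc_injective _ h1
            rw [hjr]
            exact hlt
          · rw [if_neg h1]
            exact h.2
      have hs2sub : ∀ mu ∈ s2, Function.update mu r' (mu r' - 1) ∈ itl N ka' := by
        intro mu hmu
        rw [hs2, Finset.mem_filter] at hmu
        obtain ⟨hmem, heq⟩ := hmu
        refine Fintype.mem_piFinset.2 fun j => Finset.mem_Icc.2 ?_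
        have h := Finset.mem_Icc.1 (Fintype.mem_piFinset.1 hmem j)
        rw [hka'def, Function.update_apply, Function.update_apply, Function.update_apply]
        rcases eq_or_ne j r' with rfl | hj
        · rw [if_pos rfl, heq]
          have hsuc : r'.succ ≠ r := by
            rw [hrr']; simp only [ne_eq, Fin.ext_iff, Fin.val_succ, Fin.coe_castSucc]; omega
          have hcs : r'.castSucc = r := hrr'.symm
          rw [if_neg hsuc, if_pos hcs]
          exact ⟨hstep, by omega⟩
        · rw [if_neg hj]
          have hcs : j.castSucc ≠ r := by
            rw [hrr']
            exact fun h' => hj (Fin.castSucc_injective _ h')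
          rw [if_neg hcs]
          constructor
          · by_cases h1 : j.succ = r
            · rw [if_pos h1, ← h1]
              omega
            · rw [if_neg h1]
              exact h.1
          · exact h.2
      have hinj : ∀ mu1 ∈ s2, ∀ mu2 ∈ s2,
          Function.update mu1 r' (mu1 r' - 1) = Function.update mu2 r' (mu2 r' - 1)
            → mu1 = mu2 := by
        intro mu1 h1 mu2 h2 hupd
        rw [hs2, Finset.mem_filter] at h1 h2
        funext j
        rcases eq_or_ne j r' with rfl | hj
        · rw [h1.2, h2.2]
        · have := congrFun hupd j
          rwa [Function.update_apply, if_neg hj, Function.update_apply, if_neg hj] at this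
      set Ck : ℝ := (q ^ ((r:ℕ)+1) - q ^ (N+1)) / (1-q) with hCk
      have hCknn : 0 ≤ Ck := by
        refine div_nonneg (sub_nonneg.2 ?_) (le_of_lt h1q)
        exact pow_le_pow_of_le_one (le_of_lt hq0) (le_of_lt hq1) (by omega)
      have hterm2 : ∀ mu ∈ s2, G mu * c ^ ((∑ i, ka i) - (∑ i, mu i))
          ≤ Ck * (G (Function.update mu r' (mu r' - 1)) *
              c ^ ((∑ i, ka' i) - (∑ i, Function.update mu r' (mu r' - 1) i))) := by
        intro mu hmu
        rw [hs2, Finset.mem_filter] at hmu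
        obtain ⟨hmem, heq⟩ := hmu
        have hmuanti : Antitone mu := mem_itl_antitone hka hmem
        have hmuanti' : Antitone (Function.update mu r' (mu r' - 1)) := by
          refine antitone_update_sub_one hmuanti r' fun k hk => ?_
          have h := Finset.mem_Icc.1 (Fintype.mem_piFinset.1 hmem k)
          have h2 : ka k.castSucc ≤ ka r'.succ := by
            refine hka ?_
            simp only [Fin.le_def, Fin.val_succ, Fin.coe_castSucc]
            exact hk
          rw [heq]
          omega
        have hIH := keyBound q hq0 hq1 N mu r' hmuanti hmuanti'
        have hsame : (∑ i, ka' i) - (∑ i, Function.update mu r' (mu r' - 1) i)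
            = (∑ i, ka i) - (∑ i, mu i) := by
          rw [hSka', sum_update_sub_one]
          ring
        rw [hsame]
        have hmul := mul_le_mul_of_nonneg_right hIH
          (le_of_lt (zpow_pos hcpos ((∑ i, ka i) - (∑ i, mu i))))
        calc G mu * c ^ ((∑ i, ka i) - (∑ i, mu i))
            ≤ (q ^ (((r':Fin N):ℕ)+1) - q ^ (N+1)) / (1-q)
                * G (Function.update mu r' (mu r' - 1))
                * c ^ ((∑ i, ka i) - (∑ i, mu i)) := hmul
          _ = Ck * (G (Function.update mu r' (mu r' - 1))
                * c ^ ((∑ i, ka i) - (∑ i, mu i))) := by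
              rw [hCk]
              have hval : ((r':Fin N):ℕ) = (r:ℕ) := rfl
              rw [hval]
              ring
      have hsplit : ∑ mu ∈ itl N ka, G mu * c ^ ((∑ i, ka i) - (∑ i, mu i))
          = (∑ mu ∈ s2, G mu * c ^ ((∑ i, ka i) - (∑ i, mu i)))
            + ∑ mu ∈ s1, G mu * c ^ ((∑ i, ka i) - (∑ i, mu i)) := by
        rw [hs2, hs1]
        exact (Finset.sum_filter_add_sum_filter_not _ _ _).symm
      rw [hsplit]
      have hbound1 : ∑ mu ∈ s1, G mu * c ^ ((∑ i, ka i) - (∑ i, mu i))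
          ≤ c * ∑ mu ∈ itl N ka', G mu * c ^ ((∑ i, ka' i) - (∑ i, mu i)) := by
        rw [Finset.sum_congr rfl (fun mu _ => hstep1 mu), ← Finset.mul_sum]
        exact mul_le_mul_of_nonneg_left (hFnn ka' s1 hs1sub) (le_of_lt hcpos)
      have hbound2 : ∑ mu ∈ s2, G mu * c ^ ((∑ i, ka i) - (∑ i, mu i))
          ≤ Ck * ∑ mu ∈ itl N ka', G mu * c ^ ((∑ i, ka' i) - (∑ i, mu i)) := by
        calc ∑ mu ∈ s2, G mu * c ^ ((∑ i, ka i) - (∑ i, mu i))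
            ≤ ∑ mu ∈ s2, Ck * (G (Function.update mu r' (mu r' - 1)) *
                c ^ ((∑ i, ka' i) - (∑ i, Function.update mu r' (mu r' - 1) i))) :=
              Finset.sum_le_sum hterm2
          _ = Ck * ∑ nu ∈ s2.image (fun mu => Function.update mu r' (mu r' - 1)),
                (G nu * c ^ ((∑ i, ka' i) - (∑ i, nu i))) := by
              rw [Finset.sum_image hinj, Finset.mul_sum]
          _ ≤ Ck * ∑ mu ∈ itl N ka', G mu * c ^ ((∑ i, ka' i) - (∑ i, mu i)) := by
              refine mul_le_mul_of_nonneg_left (hFnn ka' _ ?_) hCknn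
              intro nu hnu
              obtain ⟨mu, hmu, rfl⟩ := Finset.mem_image.1 hnu
              exact hs2sub mu hmu
      have hCsum : Ck + c = (q ^ ((r:ℕ)+1) - q ^ (N+1+1)) / (1-q) := by
        rw [hCk, hc]
        field_simp
        ring
      calc (∑ mu ∈ s2, G mu * c ^ ((∑ i, ka i) - (∑ i, mu i)))
            + ∑ mu ∈ s1, G mu * c ^ ((∑ i, ka i) - (∑ i, mu i))
          ≤ Ck * (∑ mu ∈ itl N ka', G mu * c ^ ((∑ i, ka' i) - (∑ i, mu i)))
            + c * ∑ mu ∈ itl N ka', G mu * c ^ ((∑ i, ka' i) - (∑ i, mu i)) :=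
            add_le_add hbound2 hbound1
        _ = (Ck + c) * ∑ mu ∈ itl N ka', G mu * c ^ ((∑ i, ka' i) - (∑ i, mu i)) := by ring
        _ = (q ^ ((r:ℕ)+1) - q ^ (N+1+1)) / (1-q)
            * ∑ mu ∈ itl N ka', G mu * c ^ ((∑ i, ka' i) - (∑ i, mu i)) := by rw [hCsum]

lemma tprod_facts (q : ℝ) (hq0 : 0 < q) (hq1 : q < 1) :
    0 < (∏' n : ℕ, (1 - q ^ (n + 1))) ∧ (∏' n : ℕ, (1 - q ^ (n + 1))) ≤ 1 - q := by
  have hfact : ∀ n : ℕ, 0 < 1 - q ^ (n + 1) := by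
    intro n
    have : q ^ (n+1) < 1 := pow_lt_one₀ (le_of_lt hq0) hq1 (Nat.succ_ne_zero n)
    linarith
  set g : ℕ → ℝ := fun n => Real.log (1 - q ^ (n + 1)) with hg
  have hgnonpos : ∀ n, g n ≤ 0 := by
    intro n
    refine Real.log_nonpos ?_ ?_
    · linarith [hfact n]
    · have : 0 < q ^ (n+1) := pow_pos hq0 _
      linarith
  have habs : ∀ n, |g n| ≤ q ^ (n+1) / (1 - q) := by
    intro n
    have h1 : 0 < 1 - q := by linarith
    rw [abs_of_nonpos (hgnonpos n)]
    have hx : q ^ (n+1) ≤ q := by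
      calc q ^ (n+1) ≤ q ^ 1 := pow_le_pow_of_le_one (le_of_lt hq0) (le_of_lt hq1) (by omega)
        _ = q := pow_one q
    have key : -Real.log (1 - q ^ (n+1)) ≤ q ^ (n+1) / (1 - q ^ (n+1)) := by
      have h2 : 0 < 1 - q ^ (n+1) := hfact n
      have h3 := Real.add_one_le_exp (q ^ (n+1) / (1 - q ^ (n+1)))
      have h4 : (1 - q ^ (n+1))⁻¹ ≤ Real.exp (q ^ (n+1) / (1 - q ^ (n+1))) := by
        rw [← one_div]
        refine le_trans ?_ h3
        rw [div_add' _ _ _ (ne_of_gt h2)]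
        rw [div_le_div_iff₀ h2 h2]
        ring_nf
        nlinarith [pow_pos hq0 (n+1)]
      have h5 : Real.log ((1 - q ^ (n+1))⁻¹) ≤ q ^ (n+1) / (1 - q ^ (n+1)) := by
        rw [← Real.log_exp (q ^ (n+1) / (1 - q ^ (n+1)))]
        exact Real.log_le_log (by positivity) h4
      rwa [Real.log_inv] at h5
    refine le_trans key ?_
    rw [div_le_div_iff₀ (hfact n) h1]
    nlinarith [pow_pos hq0 (n+1)]
  have hsummble : Summable g := by
    refine Summable.of_abs ?_
    refine Summable.of_nonneg_of_le (fun n => abs_nonneg _) habs ?_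
    have : Summable (fun n : ℕ => q ^ (n+1)) := by
      refine Summable.comp_injective ?_ (add_left_injective 1)
      exact summable_geometric_of_lt_one (le_of_lt hq0) hq1
    exact this.div_const _
  have hprod : HasProd (fun n : ℕ => 1 - q ^ (n + 1)) (Real.exp (∑' n, g n)) := by
    have hfun : (fun s : Finset ℕ => ∏ n ∈ s, (1 - q ^ (n+1)))
        = fun s : Finset ℕ => Real.exp (∑ n ∈ s, g n) := by
      funext s
      rw [Real.exp_sum]
      exact Finset.prod_congr rfl fun n _ => (Real.exp_log (hfact n)).symm
    unfold HasProd
    rw [hfun]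
    exact (Real.continuous_exp.tendsto _).comp hsummble.hasSum
  have hPeq : (∏' n : ℕ, (1 - q ^ (n + 1))) = Real.exp (∑' n, g n) := hprod.tprod_eq
  constructor
  · rw [hPeq]; exact Real.exp_pos _
  · rw [hPeq]
    have hS : (∑' n, g n) ≤ g 0 := by
      rw [Summable.tsum_eq_zero_add hsummble]
      have : (∑' n, g (n + 1)) ≤ 0 := tsum_nonpos (fun n => hgnonpos (n+1))
      linarith
    calc Real.exp (∑' n, g n) ≤ Real.exp (g 0) := Real.exp_le_exp.2 hS
      _ = 1 - q := by rw [hg]; simp only [pow_one, zero_add]; exact Real.exp_log (by linarith)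


/-- `P⁺(κ | ν) = 1_{κ ≺ ν} s_κ(q, q², …, q^M) / s_ν(1, q, …, q^M)`. -/
def Pplus (q : ℝ) (M : ℕ) (nu : Fin (M + 1) → ℤ) (ka : Fin M → ℤ) : ℝ :=
  if ∀ j : Fin M, ka j ≤ nu j.castSucc ∧ nu j.succ ≤ ka j then
    qcSchur M ka (fun j : Fin M => q ^ ((j : ℕ) + 1)) /
      qcSchur (M + 1) nu (fun j : Fin (M + 1) => q ^ (j : ℕ))
  else 0


lemma Pplus_eq {q : ℝ} {M : ℕ} {nu : Fin (M+1) → ℤ} {ka : Fin M → ℤ} (h : ka ∈ itl M nu) :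
    Pplus q M nu ka = qcSchur M ka (fun j : Fin M => q ^ ((j : ℕ) + 1)) /
      qcSchur (M + 1) nu (fun j : Fin (M + 1) => q ^ (j : ℕ)) := by
  unfold Pplus
  rw [if_pos ((cond_iff M nu ka).2 h)]

lemma Pplus_zero {q : ℝ} {M : ℕ} {nu : Fin (M+1) → ℤ} {ka : Fin M → ℤ} (h : ka ∉ itl M nu) :
    Pplus q M nu ka = 0 := by
  unfold Pplus
  rw [if_neg (fun hc => h ((cond_iff M nu ka).1 hc))]

lemma Pplus_sum (q : ℝ) (hq0 : 0 < q) (M : ℕ) (nu : Fin (M+1) → ℤ) (hnu : Antitone nu) :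
    ∑ ka ∈ itl M nu, Pplus q M nu ka = 1 := by
  have hDpos : 0 < qcSchur (M+1) nu (fun j : Fin (M+1) => q ^ (j:ℕ)) :=
    qcSchur_pos _ _ _ hnu (fun j => pow_pos hq0 _)
  rw [Finset.sum_congr rfl (fun ka hka => Pplus_eq hka), ← Finset.sum_div,
    ← branch_first M q (ne_of_gt hq0) nu]
  exact div_self (ne_of_gt hDpos)

lemma part3 (q : ℝ) (hq0 : 0 < q) (hq1 : q < 1) (M : ℕ) (nu : Fin (M+1) → ℤ)
    (hnu : Antitone nu) (r : Fin M) :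
    1 - q ^ ((r:ℕ)+1) / (∏' n : ℕ, (1 - q ^ (n + 1)))^2
      ≤ ∑ᶠ ka ∈ {ka : Fin M → ℤ | ka r = nu r.succ}, Pplus q M nu ka := by
  have h1q : (0:ℝ) < 1 - q := by linarith
  set F : (Fin M → ℤ) → ℝ := fun ka => qcSchur M ka (fun j : Fin M => q ^ ((j:ℕ)+1)) with hF
  have hFnn : ∀ ka, 0 ≤ F ka := fun ka => qcSchur_nonneg M ka _ (fun j => pow_pos hq0 _)
  set D : ℝ := qcSchur (M+1) nu (fun j : Fin (M+1) => q ^ (j:ℕ)) with hD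
  have hDpos : 0 < D := qcSchur_pos _ _ _ hnu (fun j => pow_pos hq0 _)
  set t := (itl M nu).filter (fun ka => ka r = nu r.succ) with ht
  set t' := (itl M nu).filter (fun ka => ¬ (ka r = nu r.succ)) with ht'
  have hfin : ∑ᶠ ka ∈ {ka : Fin M → ℤ | ka r = nu r.succ}, Pplus q M nu ka
      = ∑ ka ∈ t, Pplus q M nu ka := by
    refine finsum_mem_eq_sum_of_inter_support_eq _ ?_
    ext ka
    constructor
    · rintro ⟨hset, hsupp⟩
      rw [Set.mem_setOf_eq] at hset
      have hmem : ka ∈ itl M nu := by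
        by_contra hm
        exact hsupp (Pplus_zero hm)
      exact ⟨Finset.mem_coe.2 (Finset.mem_filter.2 ⟨hmem, hset⟩), hsupp⟩
    · rintro ⟨hmem, hsupp⟩
      exact ⟨(Finset.mem_filter.1 (Finset.mem_coe.1 hmem)).2, hsupp⟩
  rw [hfin]
  have hsplit : (∑ ka ∈ t, Pplus q M nu ka) + (∑ ka ∈ t', Pplus q M nu ka) = 1 := by
    rw [ht, ht', Finset.sum_filter_add_sum_filter_not]
    exact Pplus_sum q hq0 M nu hnu
  -- bound the bad sum
  set C : ℝ := (q ^ ((r:ℕ)+1) - q ^ (M+1)) / (1-q) with hC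
  have hCnn : 0 ≤ C := by
    refine div_nonneg (sub_nonneg.2 ?_) (le_of_lt h1q)
    exact pow_le_pow_of_le_one (le_of_lt hq0) (le_of_lt hq1) (by omega)
  have hterm : ∀ ka ∈ t', F ka ≤ C * F (Function.update ka r (ka r - 1)) := by
    intro ka hka
    rw [ht', Finset.mem_filter] at hka
    obtain ⟨hmem, hne⟩ := hka
    have hanti : Antitone ka := mem_itl_antitone hnu hmem
    have hbd := Finset.mem_Icc.1 (Fintype.mem_piFinset.1 hmem r)
    have hgt : nu r.succ ≤ ka r - 1 := by omega
    have hanti' : Antitone (Function.update ka r (ka r - 1)) := by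
      refine antitone_update_sub_one hanti r fun k hk => ?_
      have h1 := Finset.mem_Icc.1 (Fintype.mem_piFinset.1 hmem k)
      have h2 : nu k.castSucc ≤ nu r.succ := by
        refine hnu ?_
        simp only [Fin.le_def, Fin.val_succ, Fin.coe_castSucc]
        exact hk
      omega
    exact keyBound q hq0 hq1 M ka r hanti hanti'
  have hupdmem : ∀ ka ∈ t', Function.update ka r (ka r - 1) ∈ itl M nu := by
    intro ka hka
    rw [ht', Finset.mem_filter] at hka
    obtain ⟨hmem, hne⟩ := hka
    have hbd := Finset.mem_Icc.1 (Fintype.mem_piFinset.1 hmem r)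
    refine Fintype.mem_piFinset.2 fun j => Finset.mem_Icc.2 ?_
    have h := Finset.mem_Icc.1 (Fintype.mem_piFinset.1 hmem j)
    rw [Function.update_apply]
    by_cases hj : j = r
    · rw [if_pos hj, hj]
      subst hj
      omega
    · rw [if_neg hj]
      exact h
  have hinj : ∀ ka1 ∈ t', ∀ ka2 ∈ t',
      Function.update ka1 r (ka1 r - 1) = Function.update ka2 r (ka2 r - 1) → ka1 = ka2 := by
    intro ka1 _ ka2 _ hupd
    funext j
    have := congrFun hupd j
    rw [Function.update_apply, Function.update_apply] at this
    by_cases hj : j = r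
    · rw [if_pos hj, if_pos hj] at this
      subst hj
      omega
    · rwa [if_neg hj, if_neg hj] at this
  have hFsum : ∑ ka ∈ itl M nu, F ka = D := by
    rw [hD, branch_first M q (ne_of_gt hq0) nu]
  have hbadF : ∑ ka ∈ t', F ka ≤ C * D := by
    calc ∑ ka ∈ t', F ka
        ≤ ∑ ka ∈ t', C * F (Function.update ka r (ka r - 1)) := Finset.sum_le_sum hterm
      _ = C * ∑ nu' ∈ t'.image (fun ka => Function.update ka r (ka r - 1)), F nu' := by
          rw [Finset.sum_image hinj, Finset.mul_sum]
      _ ≤ C * ∑ ka ∈ itl M nu, F ka := by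
          refine mul_le_mul_of_nonneg_left ?_ hCnn
          refine Finset.sum_le_sum_of_subset_of_nonneg ?_ (fun ka _ _ => hFnn ka)
          intro nu' hnu'
          obtain ⟨ka, hka, rfl⟩ := Finset.mem_image.1 hnu'
          exact hupdmem ka hka
      _ = C * D := by rw [hFsum]
  have hbad : ∑ ka ∈ t', Pplus q M nu ka ≤ C := by
    have heq : ∑ ka ∈ t', Pplus q M nu ka = (∑ ka ∈ t', F ka) / D := by
      rw [Finset.sum_congr rfl (fun ka hka =>
        Pplus_eq (Finset.mem_of_mem_filter ka hka)), ← Finset.sum_div]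
    rw [heq, div_le_iff₀ hDpos]
    exact hbadF
  -- the infinite product bounds
  obtain ⟨hPpos, hPle⟩ := tprod_facts q hq0 hq1
  set P : ℝ := ∏' n : ℕ, (1 - q ^ (n + 1)) with hP
  have hP2pos : 0 < P ^ 2 := pow_pos hPpos 2
  have hP2le : P ^ 2 ≤ 1 - q := by nlinarith
  have hfrac : C ≤ q ^ ((r:ℕ)+1) / P ^ 2 := by
    rw [hC, div_le_div_iff₀ h1q hP2pos]
    have hqr : (0:ℝ) ≤ q ^ ((r:ℕ)+1) := le_of_lt (pow_pos hq0 _)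
    have hqM : (0:ℝ) < q ^ (M+1) := pow_pos hq0 _
    nlinarith
  linarith


/-- `P⁺(· | ν)` is a probability distribution on `GT_M`, and the
`P⁺(· | ν)`-mass of the set `{κ : κ_i = ν_{i+1}}` is at least `1 − qⁱ/(q;q)_∞²`
(Lemma 5.6, `lem:est1`). -/
theorem stmt14 (q : ℝ) (hq0 : 0 < q) (hq1 : q < 1)
    (M : ℕ) (hM : 1 ≤ M) (nu : Fin (M + 1) → ℤ) (hnu : Antitone nu)
    (i : ℕ) (hi1 : 1 ≤ i) (hiM : i ≤ M) :
    (∀ ka : Fin M → ℤ, 0 ≤ Pplus q M nu ka) ∧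
    HasSum (Pplus q M nu) 1 ∧
    1 - q ^ i / (∏' n : ℕ, (1 - q ^ (n + 1))) ^ 2 ≤
      ∑ᶠ ka ∈ {ka : Fin M → ℤ | ka ⟨i - 1, by omega⟩ = nu ⟨i, by omega⟩},
        Pplus q M nu ka := by
  refine ⟨?_, ?_, ?_⟩
  · intro ka
    unfold Pplus
    split
    · exact div_nonneg (qcSchur_nonneg _ _ _ (fun j => pow_pos hq0 _))
        (le_of_lt (qcSchur_pos _ _ _ hnu (fun j => pow_pos hq0 _)))
    · exact le_refl 0
  · have h := hasSum_sum_of_ne_finset_zero (s := itl M nu) (f := Pplus q M nu) (L := SummationFilter.unconditional _)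
      (fun ka hka => Pplus_zero hka)
    rwa [Pplus_sum q hq0 M nu hnu] at h
  · have h3 := part3 q hq0 hq1 M nu hnu ⟨i-1, by omega⟩
    have e2 : ((⟨i-1, by omega⟩ : Fin M) : ℕ) + 1 = i := by simp; omega
    rw [e2] at h3
    have e1 : (⟨i-1, by omega⟩ : Fin M).succ = (⟨i, by omega⟩ : Fin (M+1)) := by
      rw [Fin.ext_iff]; simp [Fin.val_succ]; omega
    rw [e1] at h3
    exact h3
end
end
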